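/- arXiv:1508.04216 — 2 statements merged into one kernel-verified Lean document; each statement's English description precedes it below -/
import Mathlib

section
/- Let 0 < p < 1. There exists a constant K_p > 0, depending only on p, such that for every real a ≠ 0 and every real b one has | |a+b|^p − |a|^p − p·sign(a)·|a|^{p−1}·b | ≤ K_p · |a|^{p−2} · b². -/
open Real Set

private lemma aux_deriv (p : ℝ) (u : ℝ) (hu : 0 < 1 + u) :
    HasDerivAt (fun s : ℝ => (1 + s) ^ p) (p * (1 + u) ^ (p - 1)) u := by
  have h1 : HasDerivAt (fun s : ℝ => 1 + s) 1 u := (hasDerivAt_id u).const_add 1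
  have h2 := (Real.hasDerivAt_rpow_const (x := 1 + u) (p := p) (Or.inl hu.ne')).comp u h1
  simpa [Function.comp_def] using h2

private lemma key_small (p : ℝ) (hp0 : 0 < p) (hp1 : p < 1) (t : ℝ) (ht : |t| ≤ 1/2) :
    |(1 + t) ^ p - 1 - p * t| ≤ 4 * t ^ 2 := by
  -- step A: the derivative p*(1+u)^(p-1) is 4-Lipschitz on Icc (-(1/2)) (1/2)
  have hppos : (0:ℝ) ≤ p := hp0.le
  have stepA : ∀ u ∈ Icc (-(1/2):ℝ) (1/2),
      |p * (1 + u) ^ (p - 1) - p| ≤ 4 * |u| := by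
    intro u hu
    have hupos : (0:ℝ) < 1 + u := by
      have := hu.1; norm_num at this ⊢; linarith
    -- apply mean value inequality to f v = p*(1+v)^(p-1) on Icc (-(1/2)) (1/2)
    have hderiv : ∀ v ∈ Icc (-(1/2):ℝ) (1/2),
        HasDerivWithinAt (fun v : ℝ => p * (1 + v) ^ (p - 1))
          (p * ((p - 1) * (1 + v) ^ (p - 1 - 1))) (Icc (-(1/2):ℝ) (1/2)) v := by
      intro v hv
      have hvpos : (0:ℝ) < 1 + v := by
        have := hv.1; norm_num at this ⊢; linarith
      exact ((aux_deriv (p - 1) v hvpos).const_mul p).hasDerivWithinAt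
    have hbound : ∀ v ∈ Icc (-(1/2):ℝ) (1/2),
        ‖p * ((p - 1) * (1 + v) ^ (p - 1 - 1))‖ ≤ 4 := by
      intro v hv
      have hvpos : (0:ℝ) < 1 + v := by
        have := hv.1; norm_num at this ⊢; linarith
      have hvhalf : (1/2 : ℝ) ≤ 1 + v := by
        have := hv.1; norm_num at this ⊢; linarith
      have h1 : (1 + v) ^ (p - 1 - 1) ≤ (1/2 : ℝ) ^ (p - 1 - 1) := by
        apply Real.rpow_le_rpow_of_nonpos (by norm_num) hvhalf
        linarith
      have h2 : ((1:ℝ)/2) ^ (p - 1 - 1) = (2:ℝ) ^ (2 - p) := by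
        rw [show ((1:ℝ)/2) = (2:ℝ) ^ (-1:ℝ) by norm_num [Real.rpow_neg_one],
          ← Real.rpow_mul (by norm_num : (0:ℝ) ≤ 2)]
        congr 1
        ring
      have h3 : (2:ℝ) ^ (2 - p) ≤ (2:ℝ) ^ (2:ℝ) := by
        apply Real.rpow_le_rpow_of_exponent_le one_le_two; linarith
      have h4 : (2:ℝ) ^ (2:ℝ) = 4 := by
        rw [show (2:ℝ) = ((2:ℕ):ℝ) by norm_num, Real.rpow_natCast]; norm_num
      have hposrp : (0:ℝ) ≤ (1 + v) ^ (p - 1 - 1) := Real.rpow_nonneg hvpos.le _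
      have hple : p * (1 - p) ≤ 1 := by nlinarith
      have : ‖p * ((p - 1) * (1 + v) ^ (p - 1 - 1))‖
          = p * (1 - p) * (1 + v) ^ (p - 1 - 1) := by
        rw [Real.norm_eq_abs, abs_mul, abs_mul, abs_of_nonneg hppos,
          abs_of_nonneg hposrp, abs_of_neg (by linarith : p - 1 < 0)]
        ring
      rw [this]
      calc p * (1 - p) * (1 + v) ^ (p - 1 - 1)
          ≤ 1 * ((1/2 : ℝ) ^ (p - 1 - 1)) := by
            apply mul_le_mul hple h1 hposrp (by norm_num)
        _ ≤ 4 := by rw [one_mul, h2]; rw [← h4]; exact h3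
    have h0mem : (0:ℝ) ∈ Icc (-(1/2):ℝ) (1/2) := by norm_num
    have := (convex_Icc (-(1/2):ℝ) (1/2)).norm_image_sub_le_of_norm_hasDerivWithin_le
      hderiv hbound h0mem hu
    simp only [Real.norm_eq_abs] at this
    have h10 : (1 + (0:ℝ)) ^ (p - 1) = 1 := by
      rw [add_zero, Real.one_rpow]
    calc |p * (1 + u) ^ (p - 1) - p|
        = |p * (1 + u) ^ (p - 1) - p * (1 + (0:ℝ)) ^ (p - 1)| := by rw [h10, mul_one]
      _ ≤ 4 * |u - 0| := this
      _ = 4 * |u| := by rw [sub_zero]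
  -- step B: mean value on Icc (-|t|) |t| for g
  have hderiv2 : ∀ v ∈ Icc (-|t|) |t|,
      HasDerivWithinAt (fun v : ℝ => (1 + v) ^ p - 1 - p * v)
        (p * (1 + v) ^ (p - 1) - p) (Icc (-|t|) |t|) v := by
    intro v hv
    have hvpos : (0:ℝ) < 1 + v := by
      have h1 := hv.1
      have h2 := neg_abs_le t
      have := abs_nonneg t
      nlinarith [abs_nonneg t, ht]
    have : HasDerivAt (fun v : ℝ => (1 + v) ^ p - 1 - p * v)
        (p * (1 + v) ^ (p - 1) - p) v := by
      have h := ((aux_deriv p v hvpos).sub_const 1).sub ((hasDerivAt_id v).const_mul p)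
      simpa [Pi.sub_def] using h
    exact this.hasDerivWithinAt
  have hbound2 : ∀ v ∈ Icc (-|t|) |t|,
      ‖p * (1 + v) ^ (p - 1) - p‖ ≤ 4 * |t| := by
    intro v hv
    have hvmem : v ∈ Icc (-(1/2):ℝ) (1/2) := by
      constructor
      · linarith [hv.1, neg_le_neg ht]
      · linarith [hv.2, ht]
    calc ‖p * (1 + v) ^ (p - 1) - p‖ ≤ 4 * |v| := stepA v hvmem
      _ ≤ 4 * |t| := by
          have : |v| ≤ |t| := abs_le.mpr ⟨hv.1, hv.2⟩
          linarith
  have h0mem : (0:ℝ) ∈ Icc (-|t|) |t| := by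
    constructor <;> simp [abs_nonneg]
  have htmem : t ∈ Icc (-|t|) |t| := ⟨neg_abs_le t, le_abs_self t⟩
  have := (convex_Icc (-|t|) |t|).norm_image_sub_le_of_norm_hasDerivWithin_le
    hderiv2 hbound2 h0mem htmem
  simp only [Real.norm_eq_abs] at this
  have hg0 : (1 + (0:ℝ)) ^ p - 1 - p * 0 = 0 := by
    rw [add_zero, Real.one_rpow]; ring
  calc |(1 + t) ^ p - 1 - p * t|
      = |((1 + t) ^ p - 1 - p * t) - ((1 + (0:ℝ)) ^ p - 1 - p * 0)| := by rw [hg0, sub_zero]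
    _ ≤ 4 * |t| * |t - 0| := this
    _ = 4 * t ^ 2 := by
        rw [sub_zero, mul_assoc, ← abs_mul, abs_of_nonneg (mul_self_nonneg t)]; ring

private lemma key (p : ℝ) (hp0 : 0 < p) (hp1 : p < 1) (t : ℝ) :
    |(|1 + t|) ^ p - 1 - p * t| ≤ 12 * t ^ 2 := by
  rcases le_or_gt |t| (1/2) with ht | ht
  · have h1 : (0:ℝ) < 1 + t := by
      have := neg_abs_le t; linarith
    rw [abs_of_pos h1]
    calc |(1 + t) ^ p - 1 - p * t| ≤ 4 * t ^ 2 := key_small p hp0 hp1 t ht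
      _ ≤ 12 * t ^ 2 := by nlinarith [sq_nonneg t]
  · -- large t
    have hX : (0:ℝ) ≤ (|1 + t|) ^ p := Real.rpow_nonneg (abs_nonneg _) _
    have hXle : (|1 + t|) ^ p ≤ 1 + |t| := by
      calc (|1 + t|) ^ p ≤ (1 + |t|) ^ p := by
            apply Real.rpow_le_rpow (abs_nonneg _) _ hp0.le
            calc |1 + t| ≤ |(1:ℝ)| + |t| := abs_add_le 1 t
              _ = 1 + |t| := by rw [abs_one]
        _ ≤ (1 + |t|) ^ (1:ℝ) := by
            apply Real.rpow_le_rpow_of_exponent_le _ hp1.le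
            linarith [abs_nonneg t]
        _ = 1 + |t| := Real.rpow_one _
    have hpt : |p * t| ≤ |t| := by
      rw [abs_mul, abs_of_pos hp0]
      nlinarith [abs_nonneg t]
    have htri : |(|1 + t|) ^ p - 1 - p * t| ≤ (|1 + t|) ^ p + 1 + |p * t| := by
      calc |(|1 + t|) ^ p - 1 - p * t| ≤ |(|1 + t|) ^ p - 1| + |p * t| := abs_sub _ _
        _ ≤ (|(|1 + t|) ^ p| + |(1:ℝ)|) + |p * t| := by
            gcongr; exact abs_sub _ _
        _ = (|1 + t|) ^ p + 1 + |p * t| := by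
            rw [abs_of_nonneg hX, abs_one]
    have hsq : t ^ 2 = |t| ^ 2 := (sq_abs t).symm
    calc |(|1 + t|) ^ p - 1 - p * t| ≤ (|1 + t|) ^ p + 1 + |p * t| := htri
      _ ≤ (1 + |t|) + 1 + |t| := by gcongr
      _ = 2 + 2 * |t| := by ring
      _ ≤ 12 * t ^ 2 := by rw [hsq]; nlinarith [ht.le]

/-- Second-order expansion bound for `x ↦ |x|^p`, `0 < p < 1`:
there is a constant `K_p > 0` depending only on `p` such that for all `a ≠ 0` and all `b`,
`| |a+b|^p − |a|^p − p·sign(a)·|a|^{p−1}·b | ≤ K_p · |a|^{p−2} · b²`. -/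
theorem abs_rpow_second_order_bound (p : ℝ) (hp0 : 0 < p) (hp1 : p < 1) :
    ∃ K : ℝ, 0 < K ∧ ∀ a b : ℝ, a ≠ 0 →
      |(|a + b|) ^ p - (|a|) ^ p - p * Real.sign a * (|a|) ^ (p - 1) * b|
        ≤ K * (|a|) ^ (p - 2) * b ^ 2 := by
  refine ⟨12, by norm_num, fun a b ha => ?_⟩
  have habs : (0:ℝ) < |a| := abs_pos.mpr ha
  set t : ℝ := b / a with htdef
  have e0 : a + b = a * (1 + t) := by rw [htdef]; field_simp
  have e1 : (|a + b|) ^ p = (|a|) ^ p * (|1 + t|) ^ p := by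
    rw [e0, abs_mul, Real.mul_rpow (abs_nonneg _) (abs_nonneg _)]
  have e2 : p * Real.sign a * (|a|) ^ (p - 1) * b = (|a|) ^ p * (p * t) := by
    rw [Real.rpow_sub habs, Real.rpow_one]
    rcases lt_or_gt_of_ne ha with hneg | hpos
    · rw [Real.sign_of_neg hneg, abs_of_neg hneg]
      field_simp
      linear_combination (-((-a) ^ p * b)) * mul_inv_cancel₀ ha
    · rw [Real.sign_of_pos hpos, abs_of_pos hpos]
      field_simp
      linear_combination (-b) * mul_inv_cancel₀ ha
  have e3 : (|a|) ^ (p - 2) * b ^ 2 = (|a|) ^ p * t ^ 2 := by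
    rw [Real.rpow_sub habs]
    have h2 : (|a|) ^ (2:ℝ) = a ^ 2 := by
      rw [show (2:ℝ) = ((2:ℕ):ℝ) by norm_num, Real.rpow_natCast, sq_abs]
    rw [h2, htdef]
    field_simp
  have hA : (0:ℝ) ≤ (|a|) ^ p := Real.rpow_nonneg (abs_nonneg _) _
  calc |(|a + b|) ^ p - (|a|) ^ p - p * Real.sign a * (|a|) ^ (p - 1) * b|
      = (|a|) ^ p * |(|1 + t|) ^ p - 1 - p * t| := by
        rw [e1, e2, ← abs_of_nonneg hA, ← abs_mul]
        congr 1
        rw [abs_of_nonneg hA]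
        ring
    _ ≤ (|a|) ^ p * (12 * t ^ 2) := by
        apply mul_le_mul_of_nonneg_left (key p hp0 hp1 t) hA
    _ = 12 * (|a|) ^ (p - 2) * b ^ 2 := by rw [mul_assoc, e3]; ring
end

section
/- Let (X_i)_{i≥1} be an i.i.d. sequence of real random variables on a probability space, and let 0 ≤ a < b be real numbers. Then almost surely, sup_{u ∈ [a,b]} | (1/n) Σ_{i=1}^n cos(u·X_i) − E[cos(u·X_1)] | → 0 as n → ∞. -/
open MeasureTheory ProbabilityTheory Filter

private lemma cos_lipschitz' (x y : ℝ) : |Real.cos x - Real.cos y| ≤ |x - y| := by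
  rw [Real.cos_sub_cos, abs_mul, abs_mul, abs_neg, abs_two]
  have h1 : |Real.sin ((x+y)/2)| ≤ 1 := Real.abs_sin_le_one _
  have h2 : |Real.sin ((x-y)/2)| ≤ |x-y|/2 := by
    simpa [abs_div, abs_two] using Real.abs_sin_le_abs (x := (x-y)/2)
  nlinarith [abs_nonneg (Real.sin ((x+y)/2)), abs_nonneg (Real.sin ((x-y)/2))]

private lemma cos_diff_bound' (M u v x : ℝ) (hM : 0 ≤ M) :
    |Real.cos (u * x) - Real.cos (v * x)| ≤
      |u - v| * M + 2 * (if M < |x| then (1:ℝ) else 0) := by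
  by_cases h : M < |x|
  · rw [if_pos h]
    have h1 := Real.abs_cos_le_one (u*x)
    have h2 := Real.abs_cos_le_one (v*x)
    have h3 : |Real.cos (u*x) - Real.cos (v*x)| ≤ |Real.cos (u*x)| + |Real.cos (v*x)| :=
      abs_sub _ _
    nlinarith [abs_nonneg (u - v), mul_nonneg (abs_nonneg (u - v)) hM]
  · rw [if_neg h]
    calc |Real.cos (u*x) - Real.cos (v*x)| ≤ |u*x - v*x| := cos_lipschitz' _ _
      _ = |u - v| * |x| := by rw [← abs_mul]; ring_nf
      _ ≤ |u - v| * M := by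
          have hx : |x| ≤ M := not_lt.1 h
          have := mul_le_mul_of_nonneg_left hx (abs_nonneg (u - v))
          simpa [mul_comm] using this
      _ ≤ |u - v| * M + 2 * 0 := by simp

/-- Locally uniform strong law of large numbers for the (real part of the) empirical
characteristic function of an i.i.d. sequence: almost surely,
`sup_{u ∈ [a,b]} |(1/n) Σ_{i<n} cos(u·X_i) − E[cos(u·X_0)]| → 0`. -/
theorem empirical_char_fun_unif_lln {Ω : Type*} [MeasurableSpace Ω]
    (μ : Measure Ω) [IsProbabilityMeasure μ] (X : ℕ → Ω → ℝ)
    (hmeas : ∀ i, Measurable (X i))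
    (hindep : iIndepFun X μ)
    (hident : ∀ i, IdentDistrib (X i) (X 0) μ μ)
    (a b : ℝ) (ha : 0 ≤ a) (hab : a < b) :
    ∀ᵐ ω ∂μ, Tendsto
      (fun n : ℕ => ⨆ u ∈ Set.Icc a b,
        |(∑ i ∈ Finset.range n, Real.cos (u * X i ω)) / n
          - ∫ ω', Real.cos (u * X 0 ω') ∂μ|)
      atTop (nhds 0) := by
  classical
  -- truncation indicator
  set g : ℕ → ℝ → ℝ := fun M x => if (M : ℝ) < |x| then (1:ℝ) else 0 with hg
  have gmeas : ∀ M : ℕ, Measurable (g M) := by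
    intro M
    exact Measurable.ite (measurableSet_lt measurable_const measurable_id.abs)
      measurable_const measurable_const
  have gbd : ∀ M x, |g M x| ≤ 1 := by
    intro M x; simp only [hg]; split <;> simp
  have gnonneg : ∀ M x, 0 ≤ g M x := by
    intro M x; simp only [hg]; split <;> norm_num
  have cmeas : ∀ u : ℝ, Measurable fun x : ℝ => Real.cos (u * x) :=
    fun u => Real.measurable_cos.comp (measurable_const_mul u)
  -- integrability
  have cInt : ∀ u : ℝ, Integrable (fun ω' => Real.cos (u * X 0 ω')) μ := by
    intro u
    refine (integrable_const (1:ℝ)).mono'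
      (((cmeas u).comp (hmeas 0)).aestronglyMeasurable) ?_
    exact Eventually.of_forall fun ω => by simpa using Real.abs_cos_le_one _
  have gInt : ∀ M : ℕ, Integrable (fun ω' => g M (X 0 ω')) μ := by
    intro M
    refine (integrable_const (1:ℝ)).mono'
      (((gmeas M).comp (hmeas 0)).aestronglyMeasurable) ?_
    exact Eventually.of_forall fun ω => by simpa using gbd M (X 0 ω)
  -- the truncated means tend to 0 as M → ∞ (dominated convergence)
  set I : ℕ → ℝ := fun M => ∫ ω', g M (X 0 ω') ∂μ with hI
  have hI0 : Tendsto I atTop (nhds 0) := by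
    have : Tendsto I atTop (nhds (∫ _ω', (0:ℝ) ∂μ)) := by
      refine tendsto_integral_of_dominated_convergence (fun _ => (1:ℝ))
        (fun M => ((gmeas M).comp (hmeas 0)).aestronglyMeasurable)
        (integrable_const 1)
        (fun M => Eventually.of_forall fun ω => by simpa using gbd M (X 0 ω)) ?_
      refine Eventually.of_forall fun ω => ?_
      have : ∀ᶠ M : ℕ in atTop, g M (X 0 ω) = 0 := by
        obtain ⟨M₀, hM₀⟩ := exists_nat_gt (|X 0 ω|)
        filter_upwards [eventually_ge_atTop M₀] with M hM
        have : (M₀:ℝ) ≤ M := by exact_mod_cast hM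
        simp only [hg]
        rw [if_neg (not_lt.2 (hM₀.le.trans this))]
      exact Tendsto.congr' (EventuallyEq.symm this) tendsto_const_nhds
    simpa using this
  -- a.s. events: SLLN at rational points and for the indicators
  have hA : ∀ᵐ ω ∂μ, ∀ q : ℚ,
      Tendsto (fun n : ℕ => (∑ i ∈ Finset.range n, Real.cos ((q:ℝ) * X i ω)) / n)
        atTop (nhds (∫ ω', Real.cos ((q:ℝ) * X 0 ω') ∂μ)) := by
    rw [ae_all_iff]
    intro q
    exact strong_law_ae_real (fun i ω => Real.cos ((q:ℝ) * X i ω)) (cInt q)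
      (fun i j hij => (hindep.indepFun hij).comp (cmeas q) (cmeas q))
      (fun i => (hident i).comp (cmeas q))
  have hB : ∀ᵐ ω ∂μ, ∀ M : ℕ,
      Tendsto (fun n : ℕ => (∑ i ∈ Finset.range n, g M (X i ω)) / n)
        atTop (nhds (I M)) := by
    rw [ae_all_iff]
    intro M
    exact strong_law_ae_real (fun i ω => g M (X i ω)) (gInt M)
      (fun i j hij => (hindep.indepFun hij).comp (gmeas M) (gmeas M))
      (fun i => (hident i).comp (gmeas M))
  filter_upwards [hA, hB] with ω hqω hMω
  -- deterministic part
  set S : ℕ → ℝ → ℝ := fun n u =>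
    |(∑ i ∈ Finset.range n, Real.cos (u * X i ω)) / n
      - ∫ ω', Real.cos (u * X 0 ω') ∂μ| with hS
  have Sbound : ∀ n u, S n u ≤ 2 := by
    intro n u
    have h1 : |(∑ i ∈ Finset.range n, Real.cos (u * X i ω)) / n| ≤ 1 := by
      rcases Nat.eq_zero_or_pos n with h | h
      · simp [h]
      · rw [abs_div, abs_of_nonneg (Nat.cast_nonneg n : (0:ℝ) ≤ n)]
        rw [div_le_one (by exact_mod_cast h)]
        calc |∑ i ∈ Finset.range n, Real.cos (u * X i ω)|
            ≤ ∑ i ∈ Finset.range n, |Real.cos (u * X i ω)| := Finset.abs_sum_le_sum_abs _ _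
          _ ≤ ∑ _i ∈ Finset.range n, (1:ℝ) :=
              Finset.sum_le_sum fun i _ => Real.abs_cos_le_one _
          _ = n := by simp
    have h2 : |∫ ω', Real.cos (u * X 0 ω') ∂μ| ≤ 1 := by
      have := norm_integral_le_of_norm_le_const
        (C := 1) (μ := μ) (f := fun ω' => Real.cos (u * X 0 ω'))
        (Eventually.of_forall fun ω' => by simpa using Real.abs_cos_le_one _)
      simpa using this
    calc S n u ≤ |(∑ i ∈ Finset.range n, Real.cos (u * X i ω)) / n|
        + |∫ ω', Real.cos (u * X 0 ω') ∂μ| := abs_sub _ _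
      _ ≤ 2 := by linarith
  have bdd : ∀ n : ℕ, BddAbove (Set.range fun u : ℝ => ⨆ _ : u ∈ Set.Icc a b, S n u) := by
    intro n
    refine ⟨2, ?_⟩
    rintro _ ⟨u, rfl⟩
    exact Real.iSup_le (fun _ => Sbound n u) (by norm_num)
  have snonneg : ∀ n : ℕ, 0 ≤ ⨆ u ∈ Set.Icc a b, S n u := by
    intro n
    have haI : a ∈ Set.Icc a b := ⟨le_rfl, hab.le⟩
    have h1 : S n a ≤ ⨆ u ∈ Set.Icc a b, S n u := by
      have := le_ciSup (bdd n) a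
      rwa [ciSup_pos haI] at this
    exact (abs_nonneg _).trans h1
  -- the main eventual bound
  have main : ∀ ε : ℝ, 0 < ε → ∀ᶠ n in atTop, (⨆ u ∈ Set.Icc a b, S n u) ≤ ε := by
    intro ε hε
    obtain ⟨M, hIM⟩ : ∃ M : ℕ, I M < ε/16 :=
      (hI0.eventually_lt_const (show (0:ℝ) < ε/16 by positivity)).exists
    set δ : ℝ := ε/(16*((M:ℝ)+1)) with hδdef
    have hδ : 0 < δ := by positivity
    have hδM : 2*δ*(M:ℝ) ≤ ε/8 := by
      have h1 : (M:ℝ) ≤ (M:ℝ)+1 := by linarith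
      have h2 : δ * ((M:ℝ)+1) = ε/16 := by
        rw [hδdef]; field_simp
      nlinarith [hδ.le]
    set N : ℕ := ⌈(b-a)/δ⌉₊ with hN
    have hgrid0 : ∀ k : ℕ, ∃ r : ℚ, |(a + k*δ) - r| < δ := fun k => exists_rat_near _ hδ
    choose q hq using hgrid0
    have grid : ∀ u ∈ Set.Icc a b, ∃ k ≤ N, |u - (q k : ℝ)| ≤ 2*δ := by
      intro u hu
      set k := ⌊(u - a)/δ⌋₊ with hk
      have h0 : 0 ≤ (u - a)/δ := div_nonneg (by linarith [hu.1]) hδ.le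
      have hk1 : (k:ℝ) ≤ (u-a)/δ := Nat.floor_le h0
      have hk2 : (u-a)/δ < (k:ℝ)+1 := Nat.lt_floor_add_one _
      have hkd : (k:ℝ)*δ ≤ u - a := by
        have := (le_div_iff₀ hδ).1 hk1; linarith
      have hkd2 : u - a < ((k:ℝ)+1)*δ := (div_lt_iff₀ hδ).1 hk2
      refine ⟨k, ?_, ?_⟩
      · have hmono : (u - a)/δ ≤ (b-a)/δ := by gcongr; exact hu.2
        calc k ≤ ⌊(b-a)/δ⌋₊ := Nat.floor_le_floor hmono
          _ ≤ ⌈(b-a)/δ⌉₊ := Nat.floor_le_ceil _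
      · have h3 : |u - (a + k*δ)| ≤ δ := by
          rw [abs_le]; constructor <;> nlinarith
        calc |u - (q k : ℝ)| ≤ |u - (a + k*δ)| + |(a + k*δ) - (q k : ℝ)| :=
            abs_sub_le _ _ _
          _ ≤ δ + δ := add_le_add h3 (hq k).le
          _ = 2*δ := by ring
    have h1 : ∀ᶠ n in atTop, ∀ k ∈ Finset.range (N+1),
        |(∑ i ∈ Finset.range n, Real.cos ((q k : ℝ) * X i ω)) / n
          - ∫ ω', Real.cos ((q k : ℝ) * X 0 ω') ∂μ| < ε/16 := by
      rw [eventually_all_finset]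
      intro k _
      have := (hqω (q k)).eventually
        (Metric.ball_mem_nhds _ (show (0:ℝ) < ε/16 by positivity))
      filter_upwards [this] with n hn
      rw [Real.dist_eq] at hn
      exact hn
    have h2 : ∀ᶠ n in atTop, (∑ i ∈ Finset.range n, g M (X i ω)) / n ≤ ε/8 := by
      have := (hMω M).eventually
        (Metric.ball_mem_nhds _ (show (0:ℝ) < ε/16 by positivity))
      filter_upwards [this] with n hn
      rw [Real.dist_eq] at hn
      have h' := abs_lt.1 hn
      linarith [h'.2]
    filter_upwards [h1, h2, eventually_ge_atTop 1] with n hgridn havgn hn1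
    refine Real.iSup_le (fun u => Real.iSup_le (fun hu => ?_) hε.le) hε.le
    obtain ⟨k, hkN, hknear⟩ := grid u hu
    have hn0 : (0:ℝ) < n := by
      have : 0 < n := hn1
      exact_mod_cast this
    have hM0 : (0:ℝ) ≤ M := Nat.cast_nonneg M
    -- (A) oscillation of the empirical averages
    have hAbound : |(∑ i ∈ Finset.range n, Real.cos (u * X i ω)) / n
        - (∑ i ∈ Finset.range n, Real.cos ((q k : ℝ) * X i ω)) / n|
        ≤ |u - (q k : ℝ)| * M + 2*((∑ i ∈ Finset.range n, g M (X i ω))/n) := by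
      rw [div_sub_div_same, ← Finset.sum_sub_distrib, abs_div,
        abs_of_nonneg hn0.le]
      calc (|∑ i ∈ Finset.range n,
              (Real.cos (u * X i ω) - Real.cos ((q k:ℝ) * X i ω))|) / n
          ≤ (∑ i ∈ Finset.range n,
              |Real.cos (u * X i ω) - Real.cos ((q k:ℝ) * X i ω)|) / n := by
            gcongr
            exact Finset.abs_sum_le_sum_abs _ _
        _ ≤ (∑ i ∈ Finset.range n,
              (|u - (q k:ℝ)| * M + 2 * g M (X i ω))) / n := by
            gcongr with i hi
            exact cos_diff_bound' M u (q k) (X i ω) hM0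
        _ = |u - (q k:ℝ)| * M + 2*((∑ i ∈ Finset.range n, g M (X i ω))/n) := by
            rw [Finset.sum_add_distrib, Finset.sum_const, Finset.card_range,
              nsmul_eq_mul, ← Finset.mul_sum, add_div, mul_div_cancel_left₀ _ hn0.ne',
              mul_div_assoc]
    -- (C) oscillation of the limiting expectations
    have hCbound : |(∫ ω', Real.cos ((q k:ℝ) * X 0 ω') ∂μ)
        - ∫ ω', Real.cos (u * X 0 ω') ∂μ|
        ≤ |(q k:ℝ) - u| * M + 2*I M := by
      rw [← integral_sub (cInt (q k)) (cInt u)]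
      calc |∫ ω', (Real.cos ((q k:ℝ) * X 0 ω') - Real.cos (u * X 0 ω')) ∂μ|
          ≤ ∫ ω', |Real.cos ((q k:ℝ) * X 0 ω') - Real.cos (u * X 0 ω')| ∂μ := by
            simpa [Real.norm_eq_abs] using norm_integral_le_integral_norm
              (μ := μ) (fun ω' => Real.cos ((q k:ℝ) * X 0 ω') - Real.cos (u * X 0 ω'))
        _ ≤ ∫ ω', (|(q k:ℝ) - u| * M + 2 * g M (X 0 ω')) ∂μ := by
            refine integral_mono ((cInt (q k)).sub (cInt u)).abs
              ((integrable_const _).add ((gInt M).const_mul 2)) ?_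
            intro ω'
            exact cos_diff_bound' M (q k) u (X 0 ω') hM0
        _ = |(q k:ℝ) - u| * M + 2*I M := by
            rw [integral_add (integrable_const _) ((gInt M).const_mul 2),
              integral_const, MeasureTheory.integral_const_mul]
            simp [measure_univ]
            rfl
    have hnear' : |u - (q k:ℝ)| * M ≤ ε/8 := by
      calc |u - (q k:ℝ)| * M ≤ (2*δ)*M := by
            exact mul_le_mul_of_nonneg_right hknear hM0
        _ = 2*δ*(M:ℝ) := by ring
        _ ≤ ε/8 := hδM
    have hnear'' : |(q k:ℝ) - u| * M ≤ ε/8 := by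
      rwa [abs_sub_comm]
    have hgk := hgridn k (Finset.mem_range.2 (Nat.lt_succ_of_le hkN))
    have tri1 := abs_sub_le
      ((∑ i ∈ Finset.range n, Real.cos (u * X i ω)) / n)
      ((∑ i ∈ Finset.range n, Real.cos ((q k:ℝ) * X i ω)) / n)
      (∫ ω', Real.cos (u * X 0 ω') ∂μ)
    have tri2 := abs_sub_le
      ((∑ i ∈ Finset.range n, Real.cos ((q k:ℝ) * X i ω)) / n)
      (∫ ω', Real.cos ((q k:ℝ) * X 0 ω') ∂μ)
      (∫ ω', Real.cos (u * X 0 ω') ∂μ)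
    have : S n u = |(∑ i ∈ Finset.range n, Real.cos (u * X i ω)) / n
        - ∫ ω', Real.cos (u * X 0 ω') ∂μ| := rfl
    rw [this]
    linarith
  show Tendsto (fun n : ℕ => ⨆ u ∈ Set.Icc a b, S n u) atTop (nhds 0)
  rw [Metric.tendsto_atTop]
  intro ε hε
  obtain ⟨N₀, hN₀⟩ := eventually_atTop.1 (main (ε/2) (half_pos hε))
  exact ⟨N₀, fun n hn => by
    rw [Real.dist_eq, sub_zero, abs_of_nonneg (snonneg n)]
    exact lt_of_le_of_lt (hN₀ n hn) (half_lt_self hε)⟩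
end
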